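/- Let α ∈ (1/2, 1) and s > (1−α)/4 with s < 1/4. Then sup over n ∈ ℤ of the sum over pairs of nonzero integers (k, j) with 0 < |kj| ≤ |n|^{2−2α} of 1/(⟨n⟩^{2s} ⟨n+k⟩^{2s} ⟨n+j⟩^{2s} ⟨n+k+j⟩^{2s}) is finite. -/

import Mathlib

open Real

/-- Japanese bracket of an integer. -/
noncomputable def jb (m : ℤ) : ℝ := Real.sqrt (1 + (m : ℝ) ^ 2)

lemma one_le_jb (m : ℤ) : 1 ≤ jb m := by
  rw [jb]
  have h : (1:ℝ) ≤ 1 + (m:ℝ) ^ 2 := by nlinarith [sq_nonneg ((m:ℝ))]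
  have h2 := Real.sqrt_le_sqrt h
  rwa [Real.sqrt_one] at h2

lemma abs_le_jb (m : ℤ) : |(m : ℝ)| ≤ jb m := by
  rw [jb, ← Real.sqrt_sq_eq_abs]
  exact Real.sqrt_le_sqrt (by linarith)

lemma caseB_bound (α : ℝ) (hα : 1 / 2 < α) (hα1 : α < 1) {x y n : ℝ}
    (hx : 1 ≤ x) (hy : 1 ≤ y) (hn : 1 ≤ n) (hc : x * y ≤ n ^ (2 - 2 * α))
    (hxn : n < 4 * x) : x ≤ 4 * (4 : ℝ) ^ (2 * α - 1)⁻¹ ∧ y ≤ 4 * (4 : ℝ) ^ (2 * α - 1)⁻¹ := by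
  have hp : (0 : ℝ) < 2 * α - 1 := by linarith
  have hq : (0 : ℝ) < 2 - 2 * α := by linarith
  have hx0 : (0 : ℝ) < x := by linarith
  have hxp : (0 : ℝ) < x ^ (2 - 2 * α) := Real.rpow_pos_of_pos hx0 _
  have h1 : x ≤ n ^ (2 - 2 * α) := le_trans (le_mul_of_one_le_right hx0.le hy) hc
  have h2 : n ^ (2 - 2 * α) ≤ (4 * x) ^ (2 - 2 * α) :=
    Real.rpow_le_rpow (by linarith) hxn.le hq.le
  have h3 : (4 * x) ^ (2 - 2 * α) = (4 : ℝ) ^ (2 - 2 * α) * x ^ (2 - 2 * α) :=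
    Real.mul_rpow (by norm_num) hx0.le
  have hkey : x ≤ (4 : ℝ) ^ (2 - 2 * α) * x ^ (2 - 2 * α) := h1.trans (h2.trans_eq h3)
  have h5 : x ^ (2 * α - 1) ≤ (4 : ℝ) ^ (2 - 2 * α) := by
    rw [show (2 * α - 1 : ℝ) = 1 - (2 - 2 * α) by ring, Real.rpow_sub hx0, Real.rpow_one,
      div_le_iff₀ hxp]
    exact hkey
  have h6 : (4 : ℝ) ^ (2 - 2 * α) ≤ 4 := by
    calc (4 : ℝ) ^ (2 - 2 * α) ≤ (4 : ℝ) ^ (1 : ℝ) :=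
          Real.rpow_le_rpow_of_exponent_le (by norm_num) (by linarith)
      _ = 4 := Real.rpow_one 4
  have h7 : x ≤ (4 : ℝ) ^ (2 * α - 1)⁻¹ := by
    have := Real.rpow_le_rpow (Real.rpow_nonneg hx0.le _) (h5.trans h6) (inv_nonneg.2 hp.le)
    rwa [Real.rpow_rpow_inv hx0.le hp.ne'] at this
  have hB4 : (0 : ℝ) < (4 : ℝ) ^ (2 * α - 1)⁻¹ := Real.rpow_pos_of_pos (by norm_num) _
  constructor
  · nlinarith
  · have hyn : y ≤ n := by
      calc y ≤ x * y := le_mul_of_one_le_left (by linarith) hx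
        _ ≤ n ^ (2 - 2 * α) := hc
        _ ≤ n ^ (1 : ℝ) := Real.rpow_le_rpow_of_exponent_le hn (by linarith)
        _ = n := Real.rpow_one n
    linarith

set_option maxHeartbeats 2000000 in
/-- uniform-in-`n` bound on the low-interaction sum in the Strichartz estimate.
Here `p.1 = k` and `p.2 = j`. -/
theorem stmt_7 (α s : ℝ) (hα : 1 / 2 < α) (hα1 : α < 1)
    (hs : (1 - α) / 4 < s) (hs4 : s < 1 / 4) :
    ∃ C : ℝ, ∀ n : ℤ,
      (∑' p : ℤ × ℤ,
        if p.1 ≠ 0 ∧ p.2 ≠ 0 ∧ (|p.1 * p.2| : ℝ) ≤ (|n| : ℝ) ^ (2 - 2 * α) then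
          1 / (jb n ^ (2 * s) * jb (n + p.1) ^ (2 * s) * jb (n + p.2) ^ (2 * s)
            * jb (n + p.1 + p.2) ^ (2 * s))
        else 0) ≤ C := by
  have h2α : (0 : ℝ) < 2 - 2 * α := by linarith
  have hspos : (0 : ℝ) < s := by linarith
  set ε : ℝ := 8 * s / (2 - 2 * α) with hεdef
  have hεpos : 0 < ε := div_pos (by linarith) h2α
  have hε1 : 1 < ε := by
    rw [hεdef, lt_div_iff₀ h2α]; linarith
  set B : ℝ := 4 * (4 : ℝ) ^ (2 * α - 1)⁻¹ with hBdef
  have hB4 : (0 : ℝ) < (4 : ℝ) ^ (2 * α - 1)⁻¹ := Real.rpow_pos_of_pos (by norm_num) _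
  have hBpos : 0 < B := by rw [hBdef]; positivity
  have hB1 : 1 ≤ B := by
    have : (1:ℝ) ≤ (4 : ℝ) ^ (2 * α - 1)⁻¹ :=
      Real.one_le_rpow (by norm_num) (inv_nonneg.2 (by linarith))
    rw [hBdef]; linarith
  set C₂ : ℝ := 2 ^ (8 * s) + B ^ (2 * ε) with hC₂def
  have h2rpos : (0:ℝ) < 2 ^ (8 * s) := Real.rpow_pos_of_pos (by norm_num) _
  have hBrpos : (0:ℝ) < B ^ (2 * ε) := Real.rpow_pos_of_pos hBpos _
  have hC₂pos : 0 < C₂ := by rw [hC₂def]; linarith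
  set h : ℤ → ℝ := fun m => |(m : ℝ)| ^ (-ε) with hhdef
  have hh_nonneg : ∀ m, 0 ≤ h m := fun m => Real.rpow_nonneg (abs_nonneg _) _
  have hsum : Summable h := summable_abs_int_rpow hε1
  set g : ℤ × ℤ → ℝ := fun p => C₂ * (h p.1 * h p.2) with hgdef
  have hg_nonneg : ∀ p, 0 ≤ g p := fun p =>
    mul_nonneg hC₂pos.le (mul_nonneg (hh_nonneg p.1) (hh_nonneg p.2))
  have hgsum : Summable g :=
    ((hsum.mul_of_nonneg hsum hh_nonneg hh_nonneg)).mul_left C₂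
  have hjbpos : ∀ m : ℤ, (0:ℝ) < jb m ^ (2 * s) := fun m =>
    Real.rpow_pos_of_pos (lt_of_lt_of_le one_pos (one_le_jb m)) _
  refine ⟨∑' p, g p, fun n => ?_⟩
  have key : ∀ p : ℤ × ℤ,
      (if p.1 ≠ 0 ∧ p.2 ≠ 0 ∧ (|p.1 * p.2| : ℝ) ≤ (|n| : ℝ) ^ (2 - 2 * α) then
        1 / (jb n ^ (2 * s) * jb (n + p.1) ^ (2 * s) * jb (n + p.2) ^ (2 * s)
          * jb (n + p.1 + p.2) ^ (2 * s))
      else 0) ≤ g p := by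
    rintro ⟨k, j⟩
    dsimp only
    split_ifs with hcond
    swap
    · exact hg_nonneg _
    obtain ⟨hk0, hj0, hc⟩ := hcond
    have hk1 : (1 : ℝ) ≤ |(k : ℝ)| := by
      rw [← Int.cast_abs]; exact_mod_cast Int.one_le_abs hk0
    have hj1 : (1 : ℝ) ≤ |(j : ℝ)| := by
      rw [← Int.cast_abs]; exact_mod_cast Int.one_le_abs hj0
    have hc' : |(k : ℝ)| * |(j : ℝ)| ≤ |(n : ℝ)| ^ (2 - 2 * α) := by
      have h0 := hc
      push_cast at h0
      rwa [abs_mul] at h0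
    have hn1 : (1 : ℝ) ≤ |(n : ℝ)| := by
      rcases eq_or_ne n 0 with rfl | hn0
      · exfalso
        simp only [Int.cast_zero, abs_zero] at hc'
        rw [Real.zero_rpow h2α.ne'] at hc'
        nlinarith
      · rw [← Int.cast_abs]
        exact_mod_cast Int.one_le_abs hn0
    set D : ℝ := jb n ^ (2 * s) * jb (n + k) ^ (2 * s) * jb (n + j) ^ (2 * s)
        * jb (n + k + j) ^ (2 * s) with hDdef
    have hDpos : 0 < D := by
      have h1 := hjbpos n; have h2 := hjbpos (n+k); have h3 := hjbpos (n+j)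
      have h4 := hjbpos (n+k+j)
      rw [hDdef]; positivity
    set X : ℝ := |(k : ℝ)| ^ ε * |(j : ℝ)| ^ ε with hXdef
    have hkε1 : (1:ℝ) ≤ |(k : ℝ)| ^ ε := Real.one_le_rpow hk1 hεpos.le
    have hjε1 : (1:ℝ) ≤ |(j : ℝ)| ^ ε := Real.one_le_rpow hj1 hεpos.le
    have hXpos : 0 < X := by rw [hXdef]; nlinarith
    have main : 1 / D ≤ C₂ / X := by
      by_cases hA : 4 * |(k : ℝ)| ≤ |(n : ℝ)| ∧ 4 * |(j : ℝ)| ≤ |(n : ℝ)|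
      · -- Case A : k and j are small compared to n
        obtain ⟨hAk, hAj⟩ := hA
        set u : ℝ := |(n : ℝ)| / 2 with hudef
        have hu0 : 0 < u := by rw [hudef]; linarith
        have hbound : ∀ m : ℤ, u ≤ |(m : ℝ)| → u ^ (2 * s) ≤ jb m ^ (2 * s) :=
          fun m hm => Real.rpow_le_rpow hu0.le (hm.trans (abs_le_jb m)) (by linarith)
        have hbn : u ^ (2*s) ≤ jb n ^ (2*s) := hbound n (by rw [hudef]; linarith)
        have hbk : u ^ (2*s) ≤ jb (n+k) ^ (2*s) := by
          apply hbound
          push_cast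
          rw [hudef]
          have h0 := abs_add_le ((n : ℝ) + k) (-k)
          simp only [add_neg_cancel_right, abs_neg] at h0
          linarith
        have hbj : u ^ (2*s) ≤ jb (n+j) ^ (2*s) := by
          apply hbound
          push_cast
          rw [hudef]
          have h0 := abs_add_le ((n : ℝ) + j) (-j)
          simp only [add_neg_cancel_right, abs_neg] at h0
          linarith
        have hbkj : u ^ (2*s) ≤ jb (n+k+j) ^ (2*s) := by
          apply hbound
          push_cast
          rw [hudef]
          have h1 := abs_add_le ((n : ℝ) + k + j) (-k - j)
          have e1 : (n : ℝ) + k + j + (-k - j) = n := by ring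
          rw [e1] at h1
          have h2 : |(-(k:ℝ) - j)| ≤ |(k:ℝ)| + |(j:ℝ)| := by
            calc |(-(k:ℝ) - j)| = |(k:ℝ) + j| := by rw [show (-(k:ℝ) - j) = -((k:ℝ)+j) by ring, abs_neg]
              _ ≤ |(k:ℝ)| + |(j:ℝ)| := abs_add_le _ _
          linarith
        have hDge : u ^ (8 * s) ≤ D := by
          have hstep : u ^ (2*s) * u ^ (2*s) * u ^ (2*s) * u ^ (2*s) ≤ D := by
            rw [hDdef]
            have h1 := hjbpos n; have h2 := hjbpos (n+k); have h3 := hjbpos (n+j)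
            have hup : 0 < u ^ (2*s) := Real.rpow_pos_of_pos hu0 _
            gcongr
          calc u ^ (8 * s) = u ^ (2*s) * u ^ (2*s) * u ^ (2*s) * u ^ (2*s) := by
                rw [← Real.rpow_add hu0, ← Real.rpow_add hu0, ← Real.rpow_add hu0]
                congr 1
                ring
            _ ≤ D := hstep
        have hXle : X ≤ |(n : ℝ)| ^ (8 * s) := by
          have e1 : |(n : ℝ)| ^ (8 * s) = (|(n : ℝ)| ^ (2 - 2*α)) ^ ε := by
            rw [← Real.rpow_mul (abs_nonneg _)]
            congr 1
            rw [hεdef]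
            field_simp
            exact (div_self (sub_ne_zero.mpr (ne_of_gt hα1))).symm
          rw [e1, hXdef, ← Real.mul_rpow (abs_nonneg _) (abs_nonneg _)]
          exact Real.rpow_le_rpow (by nlinarith) hc' hεpos.le
        have huval : u ^ (8 * s) = |(n : ℝ)| ^ (8 * s) / 2 ^ (8 * s) := by
          rw [hudef, Real.div_rpow (abs_nonneg _) (by norm_num)]
        calc 1 / D ≤ 1 / u ^ (8 * s) :=
              one_div_le_one_div_of_le (Real.rpow_pos_of_pos hu0 _) hDge
          _ = 2 ^ (8 * s) / |(n : ℝ)| ^ (8 * s) := by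
              rw [huval]
              rw [one_div_div]
          _ ≤ 2 ^ (8 * s) / X := by
              gcongr
          _ ≤ C₂ / X := by
              gcongr
              rw [hC₂def]
              linarith
      · -- Case B : k or j is comparable to n, so both are bounded
        rw [not_and_or] at hA
        push_neg at hA
        have hkB : |(k : ℝ)| ≤ B ∧ |(j : ℝ)| ≤ B := by
          rcases hA with hlt | hlt
          · rw [hBdef]
            exact caseB_bound α hα hα1 hk1 hj1 hn1 hc' hlt
          · rw [hBdef]
            obtain ⟨hj', hk'⟩ := caseB_bound α hα hα1 hj1 hk1 hn1
              (by rw [mul_comm]; exact hc') hlt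
            exact ⟨hk', hj'⟩
        have hD1 : 1 ≤ D := by
          rw [hDdef]
          have l1 : (1:ℝ) ≤ jb n ^ (2*s) := Real.one_le_rpow (one_le_jb n) (by linarith)
          have l2 : (1:ℝ) ≤ jb (n+k) ^ (2*s) := Real.one_le_rpow (one_le_jb _) (by linarith)
          have l3 : (1:ℝ) ≤ jb (n+j) ^ (2*s) := Real.one_le_rpow (one_le_jb _) (by linarith)
          have l4 : (1:ℝ) ≤ jb (n+k+j) ^ (2*s) := Real.one_le_rpow (one_le_jb _) (by linarith)
          exact one_le_mul_of_one_le_of_one_le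
            (one_le_mul_of_one_le_of_one_le (one_le_mul_of_one_le_of_one_le l1 l2) l3) l4
        have hXB : X ≤ B ^ (2 * ε) := by
          have e2 : B ^ (2 * ε) = B ^ ε * B ^ ε := by
            rw [← Real.rpow_add hBpos]
            congr 1
            ring
          rw [e2, hXdef]
          have b1 : |(k : ℝ)| ^ ε ≤ B ^ ε := Real.rpow_le_rpow (abs_nonneg _) hkB.1 hεpos.le
          have b2 : |(j : ℝ)| ^ ε ≤ B ^ ε := Real.rpow_le_rpow (abs_nonneg _) hkB.2 hεpos.le
          have b3 : (0:ℝ) ≤ |(k : ℝ)| ^ ε := by linarith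
          have b4 : (0:ℝ) ≤ B ^ ε := Real.rpow_nonneg hBpos.le ε
          nlinarith
        calc 1 / D ≤ 1 := by
              rw [div_le_one hDpos]; exact hD1
          _ ≤ B ^ (2 * ε) / X := by
              rw [le_div_iff₀ hXpos, one_mul]; exact hXB
          _ ≤ C₂ / X := by
              gcongr
              rw [hC₂def]
              linarith
    have hgval : g (k, j) = C₂ / X := by
      rw [hgdef, hhdef, hXdef]
      dsimp only
      rw [Real.rpow_neg (abs_nonneg _), Real.rpow_neg (abs_nonneg _), ← mul_inv,
        ← div_eq_mul_inv]
    rw [hgval]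
    exact main
  have hf_nonneg : ∀ p : ℤ × ℤ,
      0 ≤ (if p.1 ≠ 0 ∧ p.2 ≠ 0 ∧ (|p.1 * p.2| : ℝ) ≤ (|n| : ℝ) ^ (2 - 2 * α) then
        1 / (jb n ^ (2 * s) * jb (n + p.1) ^ (2 * s) * jb (n + p.2) ^ (2 * s)
          * jb (n + p.1 + p.2) ^ (2 * s))
      else 0) := by
    intro p
    split_ifs with hcond
    · have h1 := hjbpos n
      have h2 := hjbpos (n + p.1)
      have h3 := hjbpos (n + p.2)
      have h4 := hjbpos (n + p.1 + p.2)
      positivity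
    · exact le_refl 0
  exact Summable.tsum_le_tsum key (Summable.of_nonneg_of_le hf_nonneg key hgsum) hgsum
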